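/- Let Q be a Dynkin quiver, α a positive root, d a dimension vector, and suppose α ↠ e' where e' is the dimension vector of an injective representation I. Then there exists a nonzero dimension vector f with f ↪ α (f is the dimension vector of a subrepresentation of U_α) such that ⟨f, d⟩ ≤ ⟨d, e'⟩ for the Euler form ⟨−,−⟩. -/

import Mathlib

/-- A finite-dimensional representation of the finite quiver with vertex set `ι` and arrow
set `Ar` (an arrow `a` goes from `src a` to `tgt a`) over the field `K`. -/
structure QRep (K : Type) [Field K] (ι : Type) (Ar : Type) (src tgt : Ar → ι) where
  V : ι → Type
  [acg : ∀ i, AddCommGroup (V i)]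
  [mod : ∀ i, Module K (V i)]
  [fd : ∀ i, FiniteDimensional K (V i)]
  maps : ∀ a, V (src a) →ₗ[K] V (tgt a)

attribute [instance] QRep.acg QRep.mod QRep.fd

variable (K : Type) [Field K] (ι : Type) [Fintype ι] (Ar : Type) [Fintype Ar]
  (src tgt : Ar → ι)

/-- The dimension vector of a representation. -/
noncomputable def dimv (M : QRep K ι Ar src tgt) : ι → ℕ := fun i => Module.finrank K (M.V i)

/-- `φ` is a morphism of representations `M → N`. -/
def IsHom (M N : QRep K ι Ar src tgt) (φ : ∀ i, M.V i →ₗ[K] N.V i) : Prop :=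
  ∀ a, (N.maps a).comp (φ (src a)) = (φ (tgt a)).comp (M.maps a)

/-- The space `Hom_Q(M, N)` of morphisms of representations. -/
def homSp (M N : QRep K ι Ar src tgt) : Submodule K (∀ i, M.V i →ₗ[K] N.V i) where
  carrier := {φ | IsHom K ι Ar src tgt M N φ}
  add_mem' := by
    intro x y hx hy a
    simp only [Pi.add_apply, LinearMap.comp_add, LinearMap.add_comp, hx a, hy a]
  zero_mem' := by intro a; simp
  smul_mem' := by
    intro t x hx a
    simp only [Pi.smul_apply, LinearMap.comp_smul, LinearMap.smul_comp, hx a]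

/-- `dim Hom_Q(M, N)`. -/
noncomputable def homDim (M N : QRep K ι Ar src tgt) : ℕ :=
  Module.finrank K (homSp K ι Ar src tgt M N)

/-- The generic (minimal) hom dimension `hom(e, d)` between representations of dimension
vectors `e` and `d`. -/
noncomputable def genHom (e d : ι → ℕ) : ℕ :=
  sInf {h | ∃ M N : QRep K ι Ar src tgt,
    dimv K ι Ar src tgt M = e ∧ dimv K ι Ar src tgt N = d ∧ h = homDim K ι Ar src tgt M N}

/-- Direct sum of representations. -/
noncomputable def dsum (M N : QRep K ι Ar src tgt) : QRep K ι Ar src tgt :=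
  QRep.mk (fun i => M.V i × N.V i) (fun a => (M.maps a).prodMap (N.maps a))

/-- `m`-fold direct power of a representation. -/
noncomputable def npow (M : QRep K ι Ar src tgt) (m : ℕ) : QRep K ι Ar src tgt :=
  QRep.mk (fun i => Fin m → M.V i) (fun a => (M.maps a).compLeft (Fin m))

/-- The zero representation(s). -/
def TrivialRep (M : QRep K ι Ar src tgt) : Prop := ∀ i, Subsingleton (M.V i)

/-- Isomorphism of representations. -/
def IsoRep (M N : QRep K ι Ar src tgt) : Prop :=
  ∃ φ, IsHom K ι Ar src tgt M N φ ∧ ∀ i, Function.Bijective (φ i)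

/-- Indecomposability. -/
def Indec (M : QRep K ι Ar src tgt) : Prop :=
  ¬TrivialRep K ι Ar src tgt M ∧
    ∀ W W', IsoRep K ι Ar src tgt M (dsum K ι Ar src tgt W W') →
      TrivialRep K ι Ar src tgt W ∨ TrivialRep K ι Ar src tgt W'

/-- Rigidity, `Ext¹_Q(M, M) = 0`: surjectivity of the standard map
`∏ᵢ Hom(Mᵢ, Mᵢ) → ∏ₐ Hom(M_{src a}, M_{tgt a})` of the canonical projective resolution. -/
def Rigid (M : QRep K ι Ar src tgt) : Prop :=
  ∀ ψ : ∀ a, M.V (src a) →ₗ[K] M.V (tgt a), ∃ φ : ∀ i, M.V i →ₗ[K] M.V i,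
    ∀ a, ψ a = (M.maps a).comp (φ (src a)) - (φ (tgt a)).comp (M.maps a)

/-- `M ≅ U^m ⊕ W` where `U` is not a direct summand of `W`: the multiplicity of `U` in the
Krull–Remak–Schmidt decomposition of `M` is `m`. -/
noncomputable def HasMult (U M : QRep K ι Ar src tgt) (m : ℕ) : Prop :=
  ∃ W, IsoRep K ι Ar src tgt M (dsum K ι Ar src tgt (npow K ι Ar src tgt U m) W) ∧
    ¬∃ W', IsoRep K ι Ar src tgt W (dsum K ι Ar src tgt U W')

/-- The Euler form of the quiver. -/
def eulerForm (x y : ι → ℤ) : ℤ :=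
  ∑ i, x i * y i - ∑ a, x (src a) * y (tgt a)

/-- The quiver is Dynkin: the Euler (Tits) quadratic form is positive definite. -/
def IsDynkin : Prop := ∀ x : ι → ℤ, x ≠ 0 → 0 < eulerForm ι Ar src tgt x x

/-- `0 → U →f X →g T → 0` is an almost split (Auslander–Reiten) sequence: a non-split short
exact sequence with `U, T` indecomposable which is left almost split at `f` and right
almost split at `g`. -/
def AlmostSplit (U X T : QRep K ι Ar src tgt)
    (f : ∀ i, U.V i →ₗ[K] X.V i) (g : ∀ i, X.V i →ₗ[K] T.V i) : Prop :=
  IsHom K ι Ar src tgt U X f ∧ IsHom K ι Ar src tgt X T g ∧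
  Indec K ι Ar src tgt U ∧ Indec K ι Ar src tgt T ∧
  (∀ i, Function.Injective (f i)) ∧ (∀ i, Function.Surjective (g i)) ∧
  (∀ i, LinearMap.range (f i) = LinearMap.ker (g i)) ∧
  (¬∃ r, IsHom K ι Ar src tgt X U r ∧ ∀ i, (r i).comp (f i) = LinearMap.id) ∧
  (∀ (W : QRep K ι Ar src tgt) (h : ∀ i, U.V i →ₗ[K] W.V i),
    IsHom K ι Ar src tgt U W h →
    (¬∃ r, IsHom K ι Ar src tgt W U r ∧ ∀ i, (r i).comp (h i) = LinearMap.id) →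
    ∃ h', IsHom K ι Ar src tgt X W h' ∧ ∀ i, (h' i).comp (f i) = h i) ∧
  (∀ (W : QRep K ι Ar src tgt) (h : ∀ i, W.V i →ₗ[K] T.V i),
    IsHom K ι Ar src tgt W T h →
    (¬∃ s, IsHom K ι Ar src tgt T W s ∧ ∀ i, (h i).comp (s i) = LinearMap.id) →
    ∃ h', IsHom K ι Ar src tgt W X h' ∧ ∀ i, (g i).comp (h' i) = h i)

variable (K : Type) [Field K] (ι : Type) [Fintype ι] (Ar : Type) [Fintype Ar]
  (src tgt : Ar → ι)

/-- `M` has a quotient representation of dimension vector `e`. -/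
def HasQuotDim (M : QRep K ι Ar src tgt) (e : ι → ℕ) : Prop :=
  ∃ (N : QRep K ι Ar src tgt) (φ : ∀ i, M.V i →ₗ[K] N.V i),
    IsHom K ι Ar src tgt M N φ ∧ (∀ i, Function.Surjective (φ i)) ∧
      dimv K ι Ar src tgt N = e

/-- `M` has a subrepresentation of dimension vector `e`. -/
def HasSubDim (M : QRep K ι Ar src tgt) (e : ι → ℕ) : Prop :=
  ∃ (N : QRep K ι Ar src tgt) (φ : ∀ i, N.V i →ₗ[K] M.V i),
    IsHom K ι Ar src tgt N M φ ∧ (∀ i, Function.Injective (φ i)) ∧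
      dimv K ι Ar src tgt N = e

/-- `d ↠ e`: every representation of dimension vector `d` has a quotient of dimension
vector `e`. -/
def Covers (d e : ι → ℕ) : Prop :=
  ∀ M : QRep K ι Ar src tgt, dimv K ι Ar src tgt M = d → HasQuotDim K ι Ar src tgt M e

/-- `I` is an injective object in the category of representations. -/
def InjObj (I : QRep K ι Ar src tgt) : Prop :=
  ∀ (M N : QRep K ι Ar src tgt) (φ : ∀ i, M.V i →ₗ[K] N.V i)
    (ψ : ∀ i, M.V i →ₗ[K] I.V i),
    IsHom K ι Ar src tgt M N φ → (∀ i, Function.Injective (φ i)) →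
    IsHom K ι Ar src tgt M I ψ →
    ∃ χ, IsHom K ι Ar src tgt N I χ ∧ ∀ i, (χ i).comp (φ i) = ψ i

open Finset in
/-- Fubini over the fibers of `g`. -/
lemma aux_sum_fiber {κ : Type} [AddCommMonoid κ] [DecidableEq ι] (g : Ar → ι) (F : Ar → κ) :
    ∑ i, ∑ a ∈ univ.filter (fun a => g a = i), F a = ∑ a, F a :=
  Finset.sum_fiberwise_of_maps_to (fun a _ => mem_univ (g a)) F

/-- There is an intermediate submodule of any prescribed dimension. -/
lemma aux_exists_between {V : Type} [AddCommGroup V] [Module K V] [FiniteDimensional K V]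
    (T : Submodule K V) (k : ℕ) (h1 : Module.finrank K T ≤ k) (h2 : k ≤ Module.finrank K V) :
    ∃ U : Submodule K V, T ≤ U ∧ Module.finrank K U = k := by
  induction k with
  | zero =>
    exact ⟨T, le_refl T, Nat.le_zero.mp h1⟩
  | succ n ih =>
    rcases Nat.lt_or_ge (Module.finrank K T) (n+1) with hlt | hge
    · obtain ⟨U, hTU, hU⟩ := ih (Nat.lt_succ_iff.mp hlt) (Nat.le_of_succ_le h2)
      have hUlt : Module.finrank K U < Module.finrank K V := by omega
      obtain ⟨m, hm⟩ := Submodule.exists_of_finrank_lt U hUlt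
      have hmU : m ∉ U := by
        intro h; exact hm 1 one_ne_zero (by simpa using h)
      have hm0 : m ≠ 0 := by rintro rfl; exact hmU (Submodule.zero_mem U)
      refine ⟨U ⊔ (K ∙ m), hTU.trans le_sup_left, ?_⟩
      have hdis : Disjoint U (K ∙ m) := (Submodule.disjoint_span_singleton' hm0).mpr hmU
      have := Submodule.finrank_sup_add_finrank_inf_eq U (K ∙ m)
      rw [hdis.eq_bot] at this
      rw [finrank_span_singleton hm0] at this
      simpa [hU] using this
    · exact ⟨T, le_refl T, le_antisymm h1 hge⟩

/-- The dimension of a finite supremum of submodules is at most the sum of dimensions. -/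
lemma aux_finrank_iSup_le {σ : Type} [Fintype σ] {V : Type} [AddCommGroup V] [Module K V]
    [FiniteDimensional K V] (U : σ → Submodule K V) :
    Module.finrank K ↥(⨆ a, U a) ≤ ∑ a, Module.finrank K ↥(U a) := by
  classical
  have key : ∀ s : Finset σ, Module.finrank K ↥(s.sup U) ≤ ∑ a ∈ s, Module.finrank K ↥(U a) := by
    intro s
    induction s using Finset.induction_on with
    | empty => simp [Finset.sup_empty, finrank_bot]
    | insert _ _ hnot ih =>
      rw [Finset.sup_insert, Finset.sum_insert hnot]
      exact (Submodule.finrank_add_le_finrank_add_finrank _ _).trans (by omega)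
  have h2 : (⨆ a, U a) = Finset.univ.sup U := by
    rw [Finset.sup_eq_iSup]; simp
  rw [h2]
  exact key Finset.univ

/-- A Dynkin quiver has no oriented cycles: the arrow relation is well-founded. -/
lemma aux_wf (hdynkin : IsDynkin ι Ar src tgt) :
    WellFounded (fun x y : ι => ∃ a, src a = x ∧ tgt a = y) := by
  classical
  set r : ι → ι → Prop := fun x y => ∃ a, src a = x ∧ tgt a = y with hr
  have hirr : ∀ x, ¬ Relation.TransGen r x x := by
    intro x hx
    set S : Finset ι :=
      Finset.univ.filter (fun v => Relation.TransGen r x v ∧ Relation.TransGen r v x) with hS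
    have hxS : x ∈ S := by simp [hS, hx]
    have hstep : ∀ v ∈ S, ∃ a : Ar, src a = v ∧ tgt a ∈ S := by
      intro v hv
      rw [hS, Finset.mem_filter] at hv
      obtain ⟨-, hxv, hvx⟩ := hv
      obtain ⟨w, hvw, hwx⟩ := Relation.TransGen.head'_iff.mp hvx
      obtain ⟨a, ha1, ha2⟩ := hvw
      refine ⟨a, ha1, ?_⟩
      rw [hS, Finset.mem_filter]
      refine ⟨Finset.mem_univ _, ?_, ?_⟩
      · rw [ha2]; exact hxv.tail ⟨a, ha1, ha2⟩
      · rw [ha2]; exact Relation.TransGen.trans_right hwx hx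
    choose g hg1 hg2 using hstep
    have hAr : Ar := (g x hxS)
    have hcard : S.card ≤ (Finset.univ.filter (fun a => src a ∈ S ∧ tgt a ∈ S)).card := by
      apply Finset.card_le_card_of_injOn (fun v => if h : v ∈ S then g v h else hAr)
      · intro v hv
        have hv' : v ∈ S := hv
        simp only [dif_pos hv']
        rw [Finset.mem_coe, Finset.mem_filter]
        refine ⟨Finset.mem_univ _, ?_, hg2 v hv'⟩
        rw [hg1 v hv']; exact hv'
      · intro v hv w hw hvw
        have hv' : v ∈ S := hv
        have hw' : w ∈ S := hw
        simp only [dif_pos hv', dif_pos hw'] at hvw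
        rw [← hg1 v hv', ← hg1 w hw', hvw]
    set χ : ι → ℤ := fun v => if v ∈ S then 1 else 0 with hχ
    have hχ0 : χ ≠ 0 := by
      intro h
      have := congrFun h x
      simp [hχ, hxS] at this
    have hpos := hdynkin χ hχ0
    unfold eulerForm at hpos
    have h1 : ∑ v, χ v * χ v = (S.card : ℤ) := by
      have hc : ((S.card : ℤ)) = ∑ v, if v ∈ S then (1 : ℤ) else 0 := by
        rw [Finset.sum_boole]
        congr 2
        rw [Finset.filter_mem_eq_inter, Finset.univ_inter]
      rw [hc]
      apply Finset.sum_congr rfl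
      intro v _
      by_cases h : v ∈ S <;> simp [hχ, h]
    have h2 : ∑ a, χ (src a) * χ (tgt a)
        = ((Finset.univ.filter (fun a => src a ∈ S ∧ tgt a ∈ S)).card : ℤ) := by
      rw [← Finset.sum_boole]
      apply Finset.sum_congr rfl
      intro a _
      by_cases hs1 : src a ∈ S <;> by_cases hs2 : tgt a ∈ S <;> simp [hχ, hs1, hs2]
    rw [h1, h2] at hpos
    have hle : (S.card : ℤ) ≤ ((Finset.univ.filter (fun a => src a ∈ S ∧ tgt a ∈ S)).card : ℤ) := by
      exact_mod_cast hcard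
    omega
  have : IsIrrefl ι (Relation.TransGen r) := ⟨hirr⟩
  exact Subrelation.wf (fun h => Relation.TransGen.single h)
    (Finite.wellFounded_of_trans_of_irrefl (Relation.TransGen r))

/-- The semisimple representation with dimension vector `α`. -/
noncomputable def ssRep (α : ι → ℕ) : QRep K ι Ar src tgt :=
  QRep.mk (fun i => Fin (α i) → K) (fun _ => 0)

lemma ssRep_dimv (α : ι → ℕ) : dimv K ι Ar src tgt (ssRep K ι Ar src tgt α) = α := by
  funext i
  simp [dimv, ssRep, Module.finrank_pi]
  exact Module.finrank_fin_fun K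

/-- A covered dimension vector is pointwise dominated. -/
lemma aux_e_le (α e' : ι → ℕ) (hcov : Covers K ι Ar src tgt α e') : ∀ i, e' i ≤ α i := by
  intro i
  obtain ⟨N, φ, -, hsurj, hdN⟩ :=
    hcov (ssRep K ι Ar src tgt α) (ssRep_dimv K ι Ar src tgt α)
  have h1 : e' i = Module.finrank K (N.V i) := (congrFun hdN i).symm
  have h3 := LinearMap.finrank_range_add_finrank_ker (φ i)
  rw [LinearMap.range_eq_top.mpr (hsurj i), finrank_top] at h3
  have h4 : Module.finrank K ((ssRep K ι Ar src tgt α).V i) = α i :=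
    congrFun (ssRep_dimv K ι Ar src tgt α) i
  omega

/-- Transport of vector spaces along an equality of indices. -/
noncomputable def lcast (V : ι → Type) [∀ i, AddCommGroup (V i)] [∀ i, Module K (V i)]
    {x y : ι} (h : x = y) : V x →ₗ[K] V y := h ▸ LinearMap.id

/-- Socle inequality for an injective representation. -/
lemma aux_socle [DecidableEq ι] (I : QRep K ι Ar src tgt) (hI : InjObj K ι Ar src tgt I)
    (i : ι) :
    ∑ a ∈ Finset.univ.filter (fun a => src a = i), Module.finrank K (I.V (tgt a))
      ≤ Module.finrank K (I.V i) := by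
  classical
  set m : ∀ a : {a : Ar // src a = i}, I.V i →ₗ[K] I.V (tgt a.1) :=
    fun a => (I.maps a.1).comp (lcast K ι I.V a.2.symm) with hm
  set Φ : I.V i →ₗ[K] ∀ a : {a : Ar // src a = i}, I.V (tgt a.1) := LinearMap.pi m with hΦ
  have hsurj : Function.Surjective Φ := by
    intro w
    have key : ∃ u : I.V i, ∀ a : {a : Ar // src a = i}, m a u = w a := by
      set g : ι → ℕ := fun k => if k = i then 1 else 0 with hg
      set wv : ∀ a : Ar, I.V (tgt a) := fun a => if h : src a = i then w ⟨a, h⟩ else 0 with hwv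
      set ψ : ∀ a : Ar, (Fin (g (src a)) → K) →ₗ[K] I.V (tgt a) := fun a =>
        ∑ mi : Fin (g (src a)), (LinearMap.proj mi).smulRight (wv a) with hψ
      set E : QRep K ι Ar src tgt := QRep.mk (fun k => I.V k × (Fin (g k) → K))
        (fun a => LinearMap.prod
          ((I.maps a).comp (LinearMap.fst K _ _) + (ψ a).comp (LinearMap.snd K _ _)) 0) with hE
      have hhom : IsHom K ι Ar src tgt I E (fun k => LinearMap.inl K (I.V k) (Fin (g k) → K)) := by
        intro a
        apply LinearMap.ext
        intro x
        show (_ , _) = ((_, _) : I.V (tgt a) × (Fin (g (tgt a)) → K))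
        simp [hE]
        change I.maps a x + ψ a 0 = I.maps a x
        simp
      have hinj : ∀ k, Function.Injective (LinearMap.inl K (I.V k) (Fin (g k) → K)) :=
        fun k => LinearMap.inl_injective
      have hid : IsHom K ι Ar src tgt I I (fun k => LinearMap.id) := by
        intro a; ext x; simp
      obtain ⟨χ, hχhom, hχcomp⟩ := hI I E _ (fun k => LinearMap.id) hhom hinj hid
      refine ⟨χ i (0, fun _ => 1), ?_⟩
      rintro ⟨a, ha⟩
      subst ha
      have h6 : (I.maps a) (χ (src a) (0, fun _ => 1))
          = χ (tgt a) (E.maps a (0, fun _ => 1)) := by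
        have h5 := hχhom a
        exact LinearMap.congr_fun h5 (0, fun _ => 1)
      have h7 : E.maps a ((0 : I.V (src a)), fun _ => (1 : K)) = (ψ a (fun _ => 1), 0) := by
        show (_, _) = (_, _)
        simp [hE]
      have h8 : χ (tgt a) ((ψ a (fun _ => 1) , (0 : Fin (g (tgt a)) → K)))
          = ψ a (fun _ => 1) := by
        have := LinearMap.congr_fun (hχcomp (tgt a)) (ψ a (fun _ => 1))
        simp only [LinearMap.comp_apply, LinearMap.id_apply] at this
        exact this
      have h9 : ψ a (fun _ => 1) = w ⟨a, rfl⟩ := by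
        rw [hψ]
        simp only [LinearMap.sum_apply, LinearMap.smulRight_apply, LinearMap.proj_apply,
          one_smul]
        rw [Finset.sum_const, Finset.card_univ, Fintype.card_fin]
        rw [hwv]
        have hg1 : g (src a) = 1 := by rw [hg]; simp
        rw [hg1, one_nsmul]
        simp
      show (I.maps a).comp (lcast K ι I.V rfl.symm) (χ (src a) (0, fun _ => 1)) = w ⟨a, rfl⟩
      have hca : lcast K ι I.V (rfl : src a = src a).symm = LinearMap.id := rfl
      rw [LinearMap.comp_apply, hca]
      show (I.maps a) (χ (src a) (0, fun _ => 1)) = w ⟨a, rfl⟩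
      rw [h6, h7, h8, h9]
    obtain ⟨u, hu⟩ := key
    exact ⟨u, funext hu⟩
  have hrank := LinearMap.finrank_range_add_finrank_ker Φ
  rw [LinearMap.range_eq_top.mpr hsurj, finrank_top, Module.finrank_pi_fintype] at hrank
  have hsub : ∑ a ∈ Finset.univ.filter (fun a => src a = i), Module.finrank K (I.V (tgt a))
      = ∑ a : {a : Ar // src a = i}, Module.finrank K (I.V (tgt a.1)) :=
    Finset.sum_subtype _ (by simp) _
  omega

/-- Construction of a subrepresentation with prescribed dimension vector. -/
lemma aux_subrep [DecidableEq ι]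
    (hwf : WellFounded (fun x y : ι => ∃ a, src a = x ∧ tgt a = y))
    (α f : ι → ℕ) (hle : ∀ i, f i ≤ α i)
    (hfix : ∀ i, min (α i) (∑ a ∈ Finset.univ.filter (fun a => tgt a = i), f (src a)) ≤ f i)
    (M : QRep K ι Ar src tgt) (hdM : dimv K ι Ar src tgt M = α) :
    HasSubDim K ι Ar src tgt M f := by
  have hα : ∀ i, Module.finrank K (M.V i) = α i := fun i => congrFun hdM i
  let r : ι → ι → Prop := fun x y => ∃ a, src a = x ∧ tgt a = y
  let Tf : ∀ i : ι, (∀ y, r y i → {W : Submodule K (M.V y) // Module.finrank K ↥W = f y}) →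
      Submodule K (M.V i) := fun i rec =>
    ⨆ a : {a : Ar // tgt a = i},
      Submodule.map (lcast K ι M.V a.2)
        (Submodule.map (M.maps a.1) (rec (src a.1) ⟨a.1, rfl, a.2⟩).1)
  have hT1 : ∀ i rec, Module.finrank K ↥(Tf i rec) ≤ f i := by
    intro i rec
    refine le_trans (le_min ?_ ?_) (hfix i)
    · rw [← hα i]; exact Submodule.finrank_le _
    · refine le_trans (aux_finrank_iSup_le K _) ?_
      have hterm : ∀ a : {a : Ar // tgt a = i},
          Module.finrank K ↥(Submodule.map (lcast K ι M.V a.2)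
            (Submodule.map (M.maps a.1) (rec (src a.1) ⟨a.1, rfl, a.2⟩).1)) ≤ f (src a.1) := by
        rintro ⟨a, ha⟩
        refine le_trans (Submodule.finrank_map_le _ _) ?_
        refine le_trans (Submodule.finrank_map_le _ _) ?_
        exact le_of_eq (rec (src a) ⟨a, rfl, ha⟩).2
      refine le_trans (Finset.sum_le_sum (fun a _ => hterm a)) ?_
      rw [← Finset.sum_subtype (Finset.univ.filter (fun a => tgt a = i))
        (fun a => by simp) (fun a => f (src a))]
  have hT2 : ∀ i : ι, f i ≤ Module.finrank K (M.V i) := fun i => (hα i).symm ▸ hle i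
  let body : ∀ i : ι, (∀ y, r y i → {W : Submodule K (M.V y) // Module.finrank K ↥W = f y}) →
      {W : Submodule K (M.V i) // Module.finrank K ↥W = f i} := fun i rec =>
    ⟨(aux_exists_between K (Tf i rec) (f i) (hT1 i rec) (hT2 i)).choose,
     (aux_exists_between K (Tf i rec) (f i) (hT1 i rec) (hT2 i)).choose_spec.2⟩
  let W : ∀ i, {W : Submodule K (M.V i) // Module.finrank K ↥W = f i} :=
    fun i => hwf.fix body i
  have hWeq : ∀ i, W i = body i (fun y _ => W y) := fun i => WellFounded.fix_eq hwf body i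
  have hclosed : ∀ a : Ar, Submodule.map (M.maps a) (W (src a)).1 ≤ (W (tgt a)).1 := by
    intro a
    have h1 : Tf (tgt a) (fun y _ => W y) ≤ (W (tgt a)).1 := by
      rw [hWeq (tgt a)]
      exact (aux_exists_between K (Tf (tgt a) (fun y _ => W y)) (f (tgt a))
        (hT1 (tgt a) (fun y _ => W y)) (hT2 (tgt a))).choose_spec.1
    refine le_trans ?_ h1
    have h2 := le_iSup (fun a' : {a' : Ar // tgt a' = tgt a} =>
      Submodule.map (lcast K ι M.V a'.2)
        (Submodule.map (M.maps a'.1) ((fun y (_ : r y (tgt a)) => W y) (src a'.1)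
          ⟨a'.1, rfl, a'.2⟩).1)) ⟨a, rfl⟩
    have hca : lcast K ι M.V (rfl : tgt a = tgt a) = LinearMap.id := rfl
    rw [hca, Submodule.map_id] at h2
    exact h2
  refine ⟨QRep.mk (fun i => ↥(W i).1)
      (fun a => (M.maps a).restrict (fun x hx => hclosed a (Submodule.mem_map_of_mem hx))),
    fun i => (W i).1.subtype, ?_, ?_, ?_⟩
  · intro a
    apply LinearMap.ext
    intro x
    simp [LinearMap.restrict_apply]
  · intro i
    exact Subtype.val_injective
  · funext i
    exact (W i).2

/-- (Redundancy of injective quotients in the main theorem.) Let `Q` be a Dynkin quiver,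
`α` a positive root (the dimension vector of an indecomposable `U = U_α`), `d` a dimension
vector, and suppose `α ↠ e'` where `e' ≠ 0` is the dimension vector of an injective
representation `I`. Then there is a nonzero dimension vector `f` with `f ↪ α` (i.e. every
representation of dimension vector `α` has a subrepresentation of dimension vector `f`)
such that `⟨f, d⟩ ≤ ⟨d, e'⟩` for the Euler form. -/
theorem injective_quot_redundant (hdynkin : IsDynkin ι Ar src tgt)
    (U : QRep K ι Ar src tgt) (hUindec : Indec K ι Ar src tgt U)
    (α : ι → ℕ) (hdU : dimv K ι Ar src tgt U = α)
    (I : QRep K ι Ar src tgt) (hI : InjObj K ι Ar src tgt I)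
    (e' : ι → ℕ) (hdI : dimv K ι Ar src tgt I = e') (he' : e' ≠ 0)
    (hcov : Covers K ι Ar src tgt α e')
    (d : ι → ℕ) :
    ∃ f : ι → ℕ, f ≠ 0 ∧
      (∀ M : QRep K ι Ar src tgt, dimv K ι Ar src tgt M = α →
        HasSubDim K ι Ar src tgt M f) ∧
      eulerForm ι Ar src tgt (fun i => (f i : ℤ)) (fun i => (d i : ℤ)) ≤
        eulerForm ι Ar src tgt (fun i => (d i : ℤ)) (fun i => (e' i : ℤ)) := by
  classical
  -- the integral socle vector of `I`
  set sInt : ι → ℤ := fun i =>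
    (e' i : ℤ) - ∑ a ∈ Finset.univ.filter (fun a => src a = i), (e' (tgt a) : ℤ) with hsInt
  have hIdim : ∀ k, Module.finrank K (I.V k) = e' k := fun k => congrFun hdI k
  have hs0 : ∀ i, 0 ≤ sInt i := by
    intro i
    have h1 := aux_socle K ι Ar src tgt I hI i
    simp only [hIdim] at h1
    have h2 : (∑ a ∈ Finset.univ.filter (fun a => src a = i), (e' (tgt a) : ℤ))
        = ((∑ a ∈ Finset.univ.filter (fun a => src a = i), e' (tgt a) : ℕ) : ℤ) := by
      push_cast
      ring
    rw [hsInt]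
    simp only [h2]
    omega
  have hea : ∀ i, e' i ≤ α i := aux_e_le K ι Ar src tgt α e' hcov
  have he'c : (fun i => (e' i : ℤ)) ≠ 0 := by
    intro h
    apply he'
    funext i
    have := congrFun h i
    simpa using this
  have hpos := hdynkin _ he'c
  -- fiber decompositions of the cross terms
  have hfib : ∀ x y : ι → ℤ, ∑ a, x (src a) * y (tgt a)
      = ∑ i, x i * ∑ a ∈ Finset.univ.filter (fun a => src a = i), y (tgt a) := by
    intro x y
    rw [← aux_sum_fiber ι Ar src (fun a => x (src a) * y (tgt a))]
    apply Finset.sum_congr rfl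
    intro i _
    rw [Finset.mul_sum]
    apply Finset.sum_congr rfl
    intro a ha
    rw [(Finset.mem_filter.mp ha).2]
  have hfib2 : ∀ x y : ι → ℤ, ∑ a, x (src a) * y (tgt a)
      = ∑ i, (∑ a ∈ Finset.univ.filter (fun a => tgt a = i), x (src a)) * y i := by
    intro x y
    rw [← aux_sum_fiber ι Ar tgt (fun a => x (src a) * y (tgt a))]
    apply Finset.sum_congr rfl
    intro i _
    rw [Finset.sum_mul]
    apply Finset.sum_congr rfl
    intro a ha
    rw [(Finset.mem_filter.mp ha).2]
  -- `⟨e', e'⟩ = ∑ i, e' i * sInt i > 0` gives a vertex `j` with positive socle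
  have hee : eulerForm ι Ar src tgt (fun i => (e' i : ℤ)) (fun i => (e' i : ℤ))
      = ∑ i, (e' i : ℤ) * sInt i := by
    unfold eulerForm
    rw [hfib (fun i => (e' i : ℤ)) (fun i => (e' i : ℤ))]
    rw [← Finset.sum_sub_distrib]
    apply Finset.sum_congr rfl
    intro i _
    rw [hsInt]
    ring
  rw [hee] at hpos
  have hex : ∃ j, (0 : ℤ) < (e' j : ℤ) * sInt j := by
    by_contra hno
    push_neg at hno
    have : ∑ i, (e' i : ℤ) * sInt i ≤ ∑ _i : ι, (0 : ℤ) :=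
      Finset.sum_le_sum (fun i _ => hno i)
    simp at this
    omega
  obtain ⟨j, hj⟩ := hex
  have hj1 : 1 ≤ e' j := by
    rcases Nat.eq_zero_or_pos (e' j) with h | h
    · rw [h] at hj; simp at hj
    · exact h
  have hj2 : 1 ≤ sInt j := by
    rcases lt_or_eq_of_le (hs0 j) with h | h
    · omega
    · rw [← h] at hj; simp at hj
  -- the subrepresentation dimension vector `F`
  have hwf := aux_wf ι Ar src tgt hdynkin
  set body : ∀ i : ι, (∀ y, (∃ a, src a = y ∧ tgt a = i) → ℕ) → ℕ := fun i rec =>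
    min (α i) ((if i = j then 1 else 0)
      + ∑ a ∈ Finset.univ.filter (fun a => tgt a = i),
          if h : tgt a = i then rec (src a) ⟨a, rfl, h⟩ else 0) with hbody
  set F : ι → ℕ := fun i => hwf.fix body i with hFdef
  have hFeq : ∀ i, F i = min (α i) ((if i = j then 1 else 0)
      + ∑ a ∈ Finset.univ.filter (fun a => tgt a = i), F (src a)) := by
    intro i
    have h0 : F i = body i (fun y _ => F y) := WellFounded.fix_eq hwf body i
    rw [h0]
    show min (α i) ((if i = j then 1 else 0)
      + ∑ a ∈ Finset.univ.filter (fun a => tgt a = i),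
          if h : tgt a = i then F (src a) else 0) = _
    congr 1
    congr 1
    apply Finset.sum_congr rfl
    intro a ha
    rw [dif_pos (Finset.mem_filter.mp ha).2]
  have haux1 : ∀ i, F i ≤ α i := fun i => (hFeq i) ▸ min_le_left _ _
  have haux2 : ∀ i, min (α i)
      (∑ a ∈ Finset.univ.filter (fun a => tgt a = i), F (src a)) ≤ F i := by
    intro i
    rw [hFeq i]
    exact min_le_min (le_refl _) (Nat.le_add_left _ _)
  have hFj : 1 ≤ F j := by
    rw [hFeq j, if_pos rfl]
    refine le_min (le_trans hj1 (hea j)) ?_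
    omega
  refine ⟨F, ?_, ?_, ?_⟩
  · intro h
    have := congrFun h j
    simp only [Pi.zero_apply] at this
    omega
  · intro M hdM
    exact aux_subrep K ι Ar src tgt hwf α F haux1 haux2 M hdM
  · unfold eulerForm
    rw [hfib (fun i => (d i : ℤ)) (fun i => (e' i : ℤ))]
    rw [hfib2 (fun i => (F i : ℤ)) (fun i => (d i : ℤ))]
    rw [← Finset.sum_sub_distrib, ← Finset.sum_sub_distrib]
    apply Finset.sum_le_sum
    intro i _
    have hkey : (F i : ℤ) ≤ sInt i
        + ∑ a ∈ Finset.univ.filter (fun a => tgt a = i), (F (src a) : ℤ) := by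
      have h1 : F i ≤ (if i = j then 1 else 0)
          + ∑ a ∈ Finset.univ.filter (fun a => tgt a = i), F (src a) :=
        (hFeq i) ▸ min_le_right _ _
      have h2 : ((if i = j then 1 else 0 : ℕ) : ℤ) ≤ sInt i := by
        by_cases h : i = j
        · subst h; simp [hj2]
        · simp [h, hs0 i]
      have h3 : ((∑ a ∈ Finset.univ.filter (fun a => tgt a = i), F (src a) : ℕ) : ℤ)
          = ∑ a ∈ Finset.univ.filter (fun a => tgt a = i), (F (src a) : ℤ) := by
        push_cast
        ring
      calc (F i : ℤ) ≤ (((if i = j then 1 else 0)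
          + ∑ a ∈ Finset.univ.filter (fun a => tgt a = i), F (src a) : ℕ) : ℤ) := by
            exact_mod_cast h1
        _ = ((if i = j then 1 else 0 : ℕ) : ℤ)
          + ∑ a ∈ Finset.univ.filter (fun a => tgt a = i), (F (src a) : ℤ) := by
            rw [← h3]; push_cast; ring
        _ ≤ sInt i + ∑ a ∈ Finset.univ.filter (fun a => tgt a = i), (F (src a) : ℤ) := by
            omega
    have hd : (0 : ℤ) ≤ (d i : ℤ) := Int.natCast_nonneg _
    have hsint : (d i : ℤ) * (e' i : ℤ)
        - (d i : ℤ) * ∑ a ∈ Finset.univ.filter (fun a => src a = i), (e' (tgt a) : ℤ)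
        = (d i : ℤ) * sInt i := by
      rw [hsInt]; ring
    rw [hsint]
    nlinarith [hkey, hd]
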